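/- arXiv:1708.02504 — 2 statements merged into one kernel-verified Lean document; each statement's English description precedes it below -/
import Mathlib

section
/- (Leighton–Nehari positivity propagation.) Let φ ∈ C⁴(I) be a nontrivial solution of (σ(x)φ'')'' − p(x)φ = 0 on a real interval I, where σ > 0 is C² and p > 0 is continuous on I, and let a ∈ I. (i) If φ(a) ≥ 0, φ'(a) ≥ 0, φ''(a) ≥ 0 and (σφ'')'(a) ≥ 0, and these four values are not all zero, then φ(x) > 0, φ'(x) > 0, φ''(x) > 0 and (σφ'')'(x) > 0 for every x ∈ I with x > a. (ii) If φ(a) ≥ 0, −φ'(a) ≥ 0, φ''(a) ≥ 0 and −(σφ'')'(a) ≥ 0, and these four values are not all zero, then φ(x) > 0, −φ'(x) > 0, φ''(x) > 0 and −(σφ'')'(x) > 0 for every x ∈ I with x < a. -/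
open Set


lemma key_nonneg (J : Set ℝ) (hJ : J.OrdConnected) (f c : Fin 4 → ℝ → ℝ)
    (hdiff : ∀ i, Differentiable ℝ (f i))
    (hderiv : ∀ i, ∀ x ∈ J, deriv (f i) x = c i x * f (i + 1) x)
    (hccont : ∀ i, ContinuousOn (c i) J)
    (hcpos : ∀ i, ∀ x ∈ J, 0 < c i x)
    (a : ℝ) (ha : a ∈ J) (h0 : ∀ i, 0 ≤ f i a) :
    ∀ x ∈ J, a ≤ x → ∀ i, 0 ≤ f i x := by
  intro b hb hab
  by_contra hcon
  push_neg at hcon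
  obtain ⟨j0, hj0⟩ := hcon
  have hsub : Icc a b ⊆ J := hJ.out ha hb
  -- bound the coefficients on [a, b]
  have hcsum : ContinuousOn (fun x => ∑ i : Fin 4, |c i x|) (Icc a b) := by
    apply continuousOn_finset_sum
    intro i _
    exact ((hccont i).mono hsub).abs
  obtain ⟨C, hC⟩ := isCompact_Icc.exists_bound_of_continuousOn hcsum
  set D : ℝ := max C 1 with hD
  have hD1 : (1:ℝ) ≤ D := le_max_right _ _
  have hD0 : (0:ℝ) < D := lt_of_lt_of_le one_pos hD1
  have hcle : ∀ i, ∀ x ∈ Icc a b, c i x ≤ D := by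
    intro i x hx
    have h1 := hC x hx
    have h2 : |c i x| ≤ ∑ k : Fin 4, |c k x| := by
      apply Finset.single_le_sum (f := fun k => |c k x|) (fun k _ => abs_nonneg _)
      exact Finset.mem_univ i
    have h3 : ∑ k : Fin 4, |c k x| ≤ C := by
      have := h1
      rwa [Real.norm_eq_abs, abs_of_nonneg (Finset.sum_nonneg fun k _ => abs_nonneg _)] at this
    calc c i x ≤ |c i x| := le_abs_self _
    _ ≤ C := le_trans h2 h3
    _ ≤ D := le_max_left _ _
  -- exponential barrier
  set E : ℝ → ℝ := fun x => Real.exp (2 * D * (x - a)) with hEdef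
  have hEpos : ∀ x, 0 < E x := fun x => Real.exp_pos _
  have hE : ∀ x, HasDerivAt E (2 * D * E x) x := by
    intro x
    have h1 : HasDerivAt (fun x : ℝ => 2 * D * (x - a)) (2 * D) x := by
      simpa using ((hasDerivAt_id x).sub_const a).const_mul (2 * D)
    simpa [E, mul_comm] using h1.exp
  have hEa : E a = 1 := by simp [E]
  have hEb1 : 1 ≤ E b := by
    rw [← hEa]
    apply Real.exp_le_exp.2
    nlinarith
  set ε : ℝ := -f j0 b / (2 * E b) with hεdef
  have hε : 0 < ε := div_pos (by linarith) (by positivity)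
  set g : Fin 4 → ℝ → ℝ := fun i x => f i x + ε * E x with hgdef
  have hg : ∀ i x, HasDerivAt (g i) (deriv (f i) x + ε * (2 * D * E x)) x := by
    intro i x
    exact ((hdiff i x).hasDerivAt).add ((hE x).const_mul ε)
  have hgcont : ∀ i, Continuous (g i) := by
    intro i
    exact ((hdiff i).continuous).add (continuous_const.mul (Real.continuous_exp.comp (by continuity)))
  -- bad set
  set S : Set ℝ := Icc a b ∩ ⋃ i : Fin 4, (g i) ⁻¹' Iic 0 with hSdef
  have hSclosed : IsClosed S :=
    isClosed_Icc.inter (isClosed_iUnion_of_finite fun i => isClosed_Iic.preimage (hgcont i))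
  have hbS : b ∈ S := by
    constructor
    · exact ⟨hab, le_refl b⟩
    · apply mem_iUnion.2
      refine ⟨j0, ?_⟩
      simp only [mem_preimage, mem_Iic, g]
      have : ε * E b = -f j0 b / 2 := by
        field_simp [hεdef]
        rw [hεdef, div_mul_eq_mul_div, div_mul_eq_mul_div, div_eq_iff (mul_pos two_pos (hEpos b)).ne']
        ring
      rw [this]; linarith
  have hSbdd : BddBelow S := ⟨a, fun t ht => ht.1.1⟩
  set t₀ : ℝ := sInf S with ht₀def
  have ht₀S : t₀ ∈ S := hSclosed.csInf_mem ⟨b, hbS⟩ hSbdd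
  have ht₀I : t₀ ∈ Icc a b := ht₀S.1
  obtain ⟨j, hj'⟩ : ∃ j, t₀ ∈ g j ⁻¹' Iic 0 := mem_iUnion.1 ht₀S.2
  have hj : g j t₀ ≤ 0 := hj'
  have hga : ∀ i, 0 < g i a := by
    intro i
    simp only [g, hEa, mul_one]
    have := h0 i; linarith
  have hat₀ : a < t₀ := by
    rcases eq_or_lt_of_le ht₀I.1 with h | h
    · exact absurd hj (by rw [← h]; exact not_le.2 (hga j))
    · exact h
  have hpre : ∀ t, a ≤ t → t < t₀ → ∀ i, 0 < g i t := by
    intro t h1 h2 i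
    by_contra hcon2
    push_neg at hcon2
    have : t ∈ S := ⟨⟨h1, le_trans h2.le ht₀I.2⟩, mem_iUnion.2 ⟨i, hcon2⟩⟩
    exact absurd (csInf_le hSbdd this) (not_le.2 h2)
  obtain ⟨c₀, hc₀, hslope⟩ := exists_hasDerivAt_eq_slope (g j)
    (fun x => deriv (f j) x + ε * (2 * D * E x)) hat₀ (hgcont j).continuousOn
    (fun x _ => hg j x)
  have hslopeneg : deriv (f j) c₀ + ε * (2 * D * E c₀) < 0 := by
    rw [hslope]
    apply div_neg_of_neg_of_pos
    · have := hga j; linarith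
    · linarith
  have hc₀Icc : c₀ ∈ Icc a b := ⟨hc₀.1.le, le_trans hc₀.2.le ht₀I.2⟩
  have hc₀J : c₀ ∈ J := hsub hc₀Icc
  have hder : deriv (f j) c₀ = c j c₀ * f (j + 1) c₀ := hderiv j c₀ hc₀J
  have hf1 : -(ε * E c₀) < f (j + 1) c₀ := by
    have := hpre c₀ hc₀.1.le hc₀.2 (j + 1)
    simp only [g] at this; linarith
  have hcjpos := hcpos j c₀ hc₀J
  have hcjle := hcle j c₀ hc₀Icc
  have hεE : 0 < ε * E c₀ := mul_pos hε (hEpos c₀)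
  have hkey : -(D * (ε * E c₀)) < c j c₀ * f (j + 1) c₀ := by
    nlinarith [mul_pos hcjpos (show 0 < f (j+1) c₀ + ε * E c₀ by linarith),
      mul_le_mul_of_nonneg_right hcjle hεE.le]
  rw [hder] at hslopeneg
  nlinarith [mul_pos hD0 hεE]

lemma key_pos (J : Set ℝ) (hJ : J.OrdConnected) (f c : Fin 4 → ℝ → ℝ)
    (hdiff : ∀ i, Differentiable ℝ (f i))
    (hderiv : ∀ i, ∀ x ∈ J, deriv (f i) x = c i x * f (i + 1) x)
    (hccont : ∀ i, ContinuousOn (c i) J)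
    (hcpos : ∀ i, ∀ x ∈ J, 0 < c i x)
    (a : ℝ) (ha : a ∈ J) (h0 : ∀ i, 0 ≤ f i a)
    (hne : ∃ k, 0 < f k a) :
    ∀ x ∈ J, a < x → ∀ i, 0 < f i x := by
  have hnn := key_nonneg J hJ f c hdiff hderiv hccont hcpos a ha h0
  -- monotonicity from a
  have hmono : ∀ i, ∀ x ∈ J, a ≤ x → f i a ≤ f i x := by
    intro i x hx hax
    rcases eq_or_lt_of_le hax with h | h
    · rw [← h]
    · obtain ⟨c₀, hc₀, hslope⟩ := exists_hasDerivAt_eq_slope (f i) (deriv (f i)) h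
        ((hdiff i).continuous).continuousOn (fun y _ => (hdiff i y).hasDerivAt)
      have hc₀J : c₀ ∈ J := hJ.out ha hx ⟨hc₀.1.le, hc₀.2.le⟩
      have hd : 0 ≤ deriv (f i) c₀ := by
        rw [hderiv i c₀ hc₀J]
        exact mul_nonneg (hcpos i c₀ hc₀J).le (hnn c₀ hc₀J hc₀.1.le (i + 1))
      rw [hslope] at hd
      have hxa : (0:ℝ) < x - a := by linarith
      have := mul_nonneg hd hxa.le
      rw [div_mul_cancel₀ _ (ne_of_gt hxa)] at this
      linarith
  -- cascade step
  have step : ∀ i : Fin 4, (∀ x ∈ J, a < x → 0 < f (i + 1) x) →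
      ∀ x ∈ J, a < x → 0 < f i x := by
    intro i hip x hx hax
    obtain ⟨c₀, hc₀, hslope⟩ := exists_hasDerivAt_eq_slope (f i) (deriv (f i)) hax
      ((hdiff i).continuous).continuousOn (fun y _ => (hdiff i y).hasDerivAt)
    have hc₀J : c₀ ∈ J := hJ.out ha hx ⟨hc₀.1.le, hc₀.2.le⟩
    have hd : 0 < deriv (f i) c₀ := by
      rw [hderiv i c₀ hc₀J]
      exact mul_pos (hcpos i c₀ hc₀J) (hip c₀ hc₀J hc₀.1)
    rw [hslope] at hd
    have hxa : (0:ℝ) < x - a := by linarith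
    have := mul_pos hd hxa
    rw [div_mul_cancel₀ _ (ne_of_gt hxa)] at this
    have := h0 i
    linarith
  obtain ⟨k, hk⟩ := hne
  have Pk : ∀ x ∈ J, a < x → 0 < f k x :=
    fun x hx hax => lt_of_lt_of_le hk (hmono k x hx hax.le)
  have P1 : ∀ x ∈ J, a < x → 0 < f (k - 1) x := by
    apply step
    have e : k - 1 + 1 = k := by grind
    rw [e]; exact Pk
  have P2 : ∀ x ∈ J, a < x → 0 < f (k - 2) x := by
    apply step
    have e : k - 2 + 1 = k - 1 := by grind
    rw [e]; exact P1
  have P3 : ∀ x ∈ J, a < x → 0 < f (k - 3) x := by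
    apply step
    have e : k - 3 + 1 = k - 2 := by grind
    rw [e]; exact P2
  intro x hx hax i
  have hcover : ∀ k i : Fin 4, i = k ∨ i = k - 1 ∨ i = k - 2 ∨ i = k - 3 := by decide
  rcases hcover k i with h | h | h | h <;> rw [h]
  · exact Pk x hx hax
  · exact P1 x hx hax
  · exact P2 x hx hax
  · exact P3 x hx hax

/-- **Leighton–Nehari positivity propagation.** Let `φ` be a nontrivial `C⁴` solution of
`(σ φ'')'' − p φ = 0` on a nondegenerate interval `I`, with `σ > 0` of class `C²` and
`p > 0` continuous on `I`, and let `a ∈ I`.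
(i) If `φ, φ', φ'', (σφ'')'` are nonnegative at `a` but not all zero, they are positive
for all `x ∈ I` with `x > a`.
(ii) If `φ, −φ', φ'', −(σφ'')'` are nonnegative at `a` but not all zero, then
`φ, −φ', φ'', −(σφ'')'` are positive for all `x ∈ I` with `x < a`. -/
theorem leighton_nehari_positivity
    (I : Set ℝ) (hI : I.OrdConnected) (hInd : ∃ x ∈ I, ∃ y ∈ I, x < y)
    (σ p φ : ℝ → ℝ)
    (hσ : ContDiff ℝ 2 σ) (hσpos : ∀ x ∈ I, 0 < σ x)
    (hp : Continuous p) (hppos : ∀ x ∈ I, 0 < p x)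
    (hφ : ContDiff ℝ 4 φ)
    (hφnt : ∃ x ∈ I, φ x ≠ 0)
    (heq : ∀ x ∈ I,
      deriv (deriv (fun t => σ t * deriv (deriv φ) t)) x - p x * φ x = 0)
    (a : ℝ) (ha : a ∈ I) :
    ((0 ≤ φ a ∧ 0 ≤ deriv φ a ∧ 0 ≤ deriv (deriv φ) a ∧
        0 ≤ deriv (fun t => σ t * deriv (deriv φ) t) a ∧
        ¬(φ a = 0 ∧ deriv φ a = 0 ∧ deriv (deriv φ) a = 0 ∧
            deriv (fun t => σ t * deriv (deriv φ) t) a = 0)) →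
      ∀ x ∈ I, a < x →
        0 < φ x ∧ 0 < deriv φ x ∧ 0 < deriv (deriv φ) x ∧
          0 < deriv (fun t => σ t * deriv (deriv φ) t) x)
    ∧
    ((0 ≤ φ a ∧ 0 ≤ -deriv φ a ∧ 0 ≤ deriv (deriv φ) a ∧
        0 ≤ -deriv (fun t => σ t * deriv (deriv φ) t) a ∧
        ¬(φ a = 0 ∧ deriv φ a = 0 ∧ deriv (deriv φ) a = 0 ∧
            deriv (fun t => σ t * deriv (deriv φ) t) a = 0)) →
      ∀ x ∈ I, x < a →
        0 < φ x ∧ 0 < -deriv φ x ∧ 0 < deriv (deriv φ) x ∧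
          0 < -deriv (fun t => σ t * deriv (deriv φ) t) x) := by
  
  -- smoothness facts
  have hφdiff : Differentiable ℝ φ := hφ.differentiable (by norm_num)
  have h3 : ContDiff ℝ 3 (deriv φ) := by
    have h : ContDiff ℝ (3 + 1) φ := by norm_num; exact hφ
    exact (contDiff_succ_iff_deriv.mp h).2.2
  have hdφdiff : Differentiable ℝ (deriv φ) := h3.differentiable (by norm_num)
  have h2 : ContDiff ℝ 2 (deriv (deriv φ)) := by
    have h : ContDiff ℝ (2 + 1) (deriv φ) := by norm_num; exact h3
    exact (contDiff_succ_iff_deriv.mp h).2.2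
  set w : ℝ → ℝ := fun t => σ t * deriv (deriv φ) t with hwdef
  have hwc : ContDiff ℝ 2 w := hσ.mul h2
  have hwdiff : Differentiable ℝ w := hwc.differentiable (by norm_num)
  have hdwdiff : Differentiable ℝ (deriv w) := by
    have h : ContDiff ℝ (1 + 1) w := by norm_num; exact hwc
    exact (contDiff_succ_iff_deriv.mp h).2.2.differentiable (by norm_num)
  constructor
  · -- part (i)
    rintro ⟨h0a, h1a, h2a, h3a, hnz⟩ x hx hax
    set f : Fin 4 → ℝ → ℝ := ![φ, deriv φ, w, deriv w] with hfdef
    set c : Fin 4 → ℝ → ℝ := ![fun _ => (1:ℝ), fun t => (σ t)⁻¹, fun _ => (1:ℝ), p]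
      with hcdef
    have hdiff : ∀ i, Differentiable ℝ (f i) := by
      intro i
      fin_cases i <;> simp [hfdef] <;>
        [exact hφdiff; exact hdφdiff; exact hwdiff; exact hdwdiff]
    have hderiv : ∀ i, ∀ y ∈ I, deriv (f i) y = c i y * f (i + 1) y := by
      intro i y hy
      fin_cases i
      · show deriv φ y = 1 * deriv φ y
        ring
      · show deriv (deriv φ) y = (σ y)⁻¹ * (σ y * deriv (deriv φ) y)
        rw [← mul_assoc, inv_mul_cancel₀ (hσpos y hy).ne', one_mul]
      · show deriv w y = 1 * deriv w y
        ring
      · show deriv (deriv w) y = p y * φ y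
        have := heq y hy
        rw [hwdef]
        linarith [heq y hy]
    have hccont : ∀ i, ContinuousOn (c i) I := by
      intro i
      fin_cases i
      · exact continuousOn_const
      · exact (hσ.continuous.continuousOn).inv₀ fun y hy => (hσpos y hy).ne'
      · exact continuousOn_const
      · exact hp.continuousOn
    have hcpos : ∀ i, ∀ y ∈ I, 0 < c i y := by
      intro i y hy
      fin_cases i
      · exact one_pos
      · exact inv_pos.2 (hσpos y hy)
      · exact one_pos
      · exact hppos y hy
    have h0 : ∀ i, 0 ≤ f i a := by
      intro i
      fin_cases i
      · exact h0a
      · exact h1a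
      · exact mul_nonneg (hσpos a ha).le h2a
      · exact h3a
    have hne : ∃ k, 0 < f k a := by
      by_contra hno
      push_neg at hno
      have e0 : φ a = 0 := le_antisymm (by simpa [hfdef] using hno 0) h0a
      have e1 : deriv φ a = 0 := le_antisymm (by simpa [hfdef] using hno 1) h1a
      have e2 : deriv (deriv φ) a = 0 := by
        have h := le_antisymm (by simpa using hno 2) (h0 2)
        have : σ a * deriv (deriv φ) a = 0 := h
        rcases mul_eq_zero.mp this with h' | h'
        · exact absurd h' (hσpos a ha).ne'
        · exact h'
      have e3 : deriv w a = 0 := le_antisymm (by simpa [hfdef] using hno 3) h3a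
      exact hnz ⟨e0, e1, e2, e3⟩
    have H := key_pos I hI f c hdiff hderiv hccont hcpos a ha h0 hne x hx hax
    refine ⟨by simpa [hfdef] using H 0, by simpa [hfdef] using H 1, ?_, by simpa [hfdef] using H 3⟩
    have h2' : 0 < σ x * deriv (deriv φ) x := by simpa [hfdef, hwdef] using H 2
    have := hσpos x hx
    by_contra hcon
    push_neg at hcon
    nlinarith
  · -- part (ii)
    rintro ⟨h0a, h1a, h2a, h3a, hnz⟩ x hx hax
    set J : Set ℝ := {t : ℝ | -t ∈ I} with hJdef
    have hJ : J.OrdConnected := by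
      constructor
      intro u hu v hv z hz
      exact hI.out hv hu ⟨neg_le_neg hz.2, neg_le_neg hz.1⟩
    set f : Fin 4 → ℝ → ℝ :=
      ![fun t => φ (-t), fun t => -deriv φ (-t), fun t => w (-t),
        fun t => -deriv w (-t)] with hfdef
    set c : Fin 4 → ℝ → ℝ :=
      ![fun _ => (1:ℝ), fun t => (σ (-t))⁻¹, fun _ => (1:ℝ), fun t => p (-t)]
      with hcdef
    have hdiff : ∀ i, Differentiable ℝ (f i) := by
      intro i
      fin_cases i
      · exact hφdiff.comp differentiable_neg
      · exact (hdφdiff.comp differentiable_neg).neg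
      · exact hwdiff.comp differentiable_neg
      · exact (hdwdiff.comp differentiable_neg).neg
    have hderiv : ∀ i, ∀ y ∈ J, deriv (f i) y = c i y * f (i + 1) y := by
      intro i y hy
      have hyI : -y ∈ I := hy
      fin_cases i
      · show deriv (fun t => φ (-t)) y = 1 * -deriv φ (-y)
        rw [deriv_comp_neg]; ring
      · show deriv (fun t => -deriv φ (-t)) y = (σ (-y))⁻¹ * (σ (-y) * deriv (deriv φ) (-y))
        rw [show deriv (fun t => -deriv φ (-t)) y = deriv (deriv φ) (-y) by
          simp [deriv.neg, deriv_comp_neg]]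
        rw [← mul_assoc, inv_mul_cancel₀ (hσpos (-y) hyI).ne', one_mul]
      · show deriv (fun t => w (-t)) y = 1 * -deriv w (-y)
        rw [deriv_comp_neg]; ring
      · show deriv (fun t => -deriv w (-t)) y = p (-y) * φ (-y)
        rw [show deriv (fun t => -deriv w (-t)) y = deriv (deriv w) (-y) by
          simp [deriv.neg, deriv_comp_neg]]
        have := heq (-y) hyI
        rw [hwdef]
        linarith [heq (-y) hyI]
    have hccont : ∀ i, ContinuousOn (c i) J := by
      intro i
      fin_cases i
      · exact continuousOn_const
      · refine ContinuousOn.inv₀ ?_ fun y hy => (hσpos (-y) hy).ne'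
        exact (hσ.continuous.comp continuous_neg).continuousOn
      · exact continuousOn_const
      · exact (hp.comp continuous_neg).continuousOn
    have hcpos : ∀ i, ∀ y ∈ J, 0 < c i y := by
      intro i y hy
      have hyI : -y ∈ I := hy
      fin_cases i
      · exact one_pos
      · exact inv_pos.2 (hσpos (-y) hyI)
      · exact one_pos
      · exact hppos (-y) hyI
    have haJ : -a ∈ J := by show -(-a) ∈ I; simpa using ha
    have h0 : ∀ i, 0 ≤ f i (-a) := by
      intro i
      fin_cases i <;> simp [hfdef]
      · exact h0a
      · linarith
      · exact mul_nonneg (hσpos a ha).le h2a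
      · linarith
    have hne : ∃ k, 0 < f k (-a) := by
      by_contra hno
      push_neg at hno
      have n0 := hno 0
      have n1 := hno 1
      have n2 := hno 2
      have n3 := hno 3
      simp [hfdef] at n0 n1 n2 n3
      have e0 : φ a = 0 := le_antisymm n0 h0a
      have e1 : deriv φ a = 0 := by linarith
      have e2 : deriv (deriv φ) a = 0 := by
        have h'' : 0 ≤ σ a * deriv (deriv φ) a := mul_nonneg (hσpos a ha).le h2a
        have h' : σ a * deriv (deriv φ) a = 0 := by
          have hle : σ a * deriv (deriv φ) a ≤ 0 := by simpa [hwdef] using n2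
          linarith
        rcases mul_eq_zero.mp h' with h3 | h3
        · exact absurd h3 (hσpos a ha).ne'
        · exact h3
      have e3 : deriv w a = 0 := by linarith
      exact hnz ⟨e0, e1, e2, e3⟩
    have hxJ : -x ∈ J := by show -(-x) ∈ I; simpa using hx
    have hax' : -a < -x := by linarith
    have H := key_pos J hJ f c hdiff hderiv hccont hcpos (-a) haJ h0 hne (-x) hxJ hax'
    have HH0 := H 0
    have HH1 := H 1
    have HH2 := H 2
    have HH3 := H 3
    simp [hfdef] at HH0 HH1 HH2 HH3
    refine ⟨HH0, by linarith, ?_, by linarith⟩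
    have h2' : 0 < σ x * deriv (deriv φ) x := by simpa [hwdef] using HH2
    have := hσpos x hx
    by_contra hcon
    push_neg at hcon
    nlinarith
end

section
/- (One-dimensionality of the half-boundary-value solution space.) Fix λ > 0. The set E_λ of functions φ ∈ C⁴([0,l]) satisfying (σ(x)φ'')'' − (q(x)φ')' = λ ρ(x) φ on [0,l] together with the three boundary conditions φ(0) = 0, φ''(0) = 0 and φ''(l) = 0 is a real vector space of dimension at most one; in particular, any two solutions in E_λ are linearly dependent. -/
open Set

noncomputable section

/-- The fourth-order Boussinesq differential operator `φ ↦ (σ φ'')'' − (q φ')'`. -/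
def boussinesqOp (σ q : ℝ → ℝ) (φ : ℝ → ℝ) : ℝ → ℝ :=
  fun x => deriv (deriv (fun t => σ t * deriv (deriv φ) t)) x
    - deriv (fun t => q t * deriv φ t) x

/-- Membership in the solution space `E_λ`: a `C⁴` function satisfying
`(σ φ'')'' − (q φ')' = λ ρ φ` on `[0,l]` together with the three boundary conditions
`φ(0) = 0`, `φ''(0) = 0` and `φ''(l) = 0`. -/
def MemHalfBVP (σ q ρ : ℝ → ℝ) (l lam : ℝ) (φ : ℝ → ℝ) : Prop :=
  ContDiff ℝ 4 φ ∧
    (∀ x ∈ Icc (0:ℝ) l, boussinesqOp σ q φ x = lam * ρ x * φ x) ∧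
    φ 0 = 0 ∧ deriv (deriv φ) 0 = 0 ∧ deriv (deriv φ) l = 0

-- peel lemmas
lemma peel3 {u : ℝ → ℝ} (hu : ContDiff ℝ 4 u) : ContDiff ℝ 3 (deriv u) := by
  have h : (4 : WithTop ℕ∞) = 3 + 1 := by norm_num
  rw [h, contDiff_succ_iff_deriv] at hu; exact hu.2.2

lemma peel2 {u : ℝ → ℝ} (hu : ContDiff ℝ 3 u) : ContDiff ℝ 2 (deriv u) := by
  have h : (3 : WithTop ℕ∞) = 2 + 1 := by norm_num
  rw [h, contDiff_succ_iff_deriv] at hu; exact hu.2.2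

lemma peel1 {u : ℝ → ℝ} (hu : ContDiff ℝ 2 u) : ContDiff ℝ 1 (deriv u) := by
  have h : (2 : WithTop ℕ∞) = 1 + 1 := by norm_num
  rw [h, contDiff_succ_iff_deriv] at hu; exact hu.2.2

lemma deriv_comb {φ ψ : ℝ → ℝ} (a b : ℝ) (hφ : Differentiable ℝ φ) (hψ : Differentiable ℝ ψ) :
    deriv (fun x => a * φ x + b * ψ x) = fun x => a * deriv φ x + b * deriv ψ x := by
  funext x
  rw [deriv_fun_add ((hφ x).const_mul a) ((hψ x).const_mul b),
    deriv_const_mul a (hφ x), deriv_const_mul b (hψ x)]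

lemma boussinesq_comb {σ q φ ψ : ℝ → ℝ} (hσs : ContDiff ℝ 3 σ) (hqs : ContDiff ℝ 1 q)
    (hφ : ContDiff ℝ 4 φ) (hψ : ContDiff ℝ 4 ψ) (a b x) :
    boussinesqOp σ q (fun t => a * φ t + b * ψ t) x
      = a * boussinesqOp σ q φ x + b * boussinesqOp σ q ψ x := by
  have hφ0 : Differentiable ℝ φ := hφ.differentiable (by norm_num)
  have hψ0 : Differentiable ℝ ψ := hψ.differentiable (by norm_num)
  have hφ1 : Differentiable ℝ (deriv φ) := (peel3 hφ).differentiable (by norm_num)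
  have hψ1 : Differentiable ℝ (deriv ψ) := (peel3 hψ).differentiable (by norm_num)
  have hφ2 : ContDiff ℝ 2 (deriv (deriv φ)) := peel2 (peel3 hφ)
  have hψ2 : ContDiff ℝ 2 (deriv (deriv ψ)) := peel2 (peel3 hψ)
  have e1 : deriv (fun t => a * φ t + b * ψ t) = fun t => a * deriv φ t + b * deriv ψ t :=
    deriv_comb a b hφ0 hψ0
  have e2 : deriv (deriv (fun t => a * φ t + b * ψ t))
      = fun t => a * deriv (deriv φ) t + b * deriv (deriv ψ) t := by
    rw [e1]; exact deriv_comb a b hφ1 hψ1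
  -- σ part
  have hσφ : ContDiff ℝ 2 (fun t => σ t * deriv (deriv φ) t) :=
    (hσs.of_le (by norm_num)).mul hφ2
  have hσψ : ContDiff ℝ 2 (fun t => σ t * deriv (deriv ψ) t) :=
    (hσs.of_le (by norm_num)).mul hψ2
  have eσ : (fun t => σ t * deriv (deriv (fun s => a * φ s + b * ψ s)) t)
      = fun t => a * (σ t * deriv (deriv φ) t) + b * (σ t * deriv (deriv ψ) t) := by
    funext t; rw [e2]; ring
  have eσd : deriv (fun t => σ t * deriv (deriv (fun s => a * φ s + b * ψ s)) t)
      = fun t => a * deriv (fun s => σ s * deriv (deriv φ) s) t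
          + b * deriv (fun s => σ s * deriv (deriv ψ) s) t := by
    rw [eσ]
    exact deriv_comb a b (hσφ.differentiable (by norm_num)) (hσψ.differentiable (by norm_num))
  have eσdd : deriv (deriv (fun t => σ t * deriv (deriv (fun s => a * φ s + b * ψ s)) t)) x
      = a * deriv (deriv (fun s => σ s * deriv (deriv φ) s)) x
        + b * deriv (deriv (fun s => σ s * deriv (deriv ψ) s)) x := by
    rw [eσd]
    have := deriv_comb a b ((peel1 hσφ).differentiable one_ne_zero)
      ((peel1 hσψ).differentiable one_ne_zero)
    exact congrFun this x
  -- q part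
  have hqφ : Differentiable ℝ (fun t => q t * deriv φ t) :=
    (hqs.differentiable one_ne_zero).mul hφ1
  have hqψ : Differentiable ℝ (fun t => q t * deriv ψ t) :=
    (hqs.differentiable one_ne_zero).mul hψ1
  have eq1 : (fun t => q t * deriv (fun s => a * φ s + b * ψ s) t)
      = fun t => a * (q t * deriv φ t) + b * (q t * deriv ψ t) := by
    funext t; rw [e1]; ring
  have eqd : deriv (fun t => q t * deriv (fun s => a * φ s + b * ψ s) t) x
      = a * deriv (fun t => q t * deriv φ t) x + b * deriv (fun t => q t * deriv ψ t) x := by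
    rw [eq1]; exact congrFun (deriv_comb a b hqφ hqψ) x
  unfold boussinesqOp
  rw [eσdd, eqd]; ring

lemma deriv_negf (u : ℝ → ℝ) : deriv (fun t => -u t) = fun t => -deriv u t := by
  funext t; exact deriv.neg

lemma boussinesq_neg (σ q u : ℝ → ℝ) (x : ℝ) :
    boussinesqOp σ q (fun t => -u t) x = -boussinesqOp σ q u x := by
  have e2 : deriv (deriv (fun t => -u t)) = fun t => -deriv (deriv u) t := by
    rw [deriv_negf]; exact deriv_negf _
  have eσ : (fun t => σ t * deriv (deriv (fun s => -u s)) t)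
      = fun t => -(σ t * deriv (deriv u) t) := by
    funext t; rw [e2]; ring
  have eq1 : (fun t => q t * deriv (fun s => -u s) t) = fun t => -(q t * deriv u t) := by
    funext t; rw [deriv_negf]; ring
  unfold boussinesqOp
  rw [eσ, eq1, deriv_negf, deriv_negf, deriv_negf]
  ring

lemma no_pos_third
    {l : ℝ} (hl : 0 < l) {ρ σ q : ℝ → ℝ}
    (hσs : ContDiff ℝ 3 σ) (hqs : ContDiff ℝ 1 q)
    {ρ0 σ0 : ℝ} (hρ0 : 0 < ρ0) (hσ0 : 0 < σ0)
    (hρb : ∀ x ∈ Icc (0:ℝ) l, ρ0 ≤ ρ x)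
    (hσb : ∀ x ∈ Icc (0:ℝ) l, σ0 ≤ σ x)
    (hqb : ∀ x ∈ Icc (0:ℝ) l, 0 ≤ q x)
    {lam : ℝ} (hlam : 0 < lam) {u : ℝ → ℝ}
    (hu : ContDiff ℝ 4 u)
    (hode : ∀ x ∈ Icc (0:ℝ) l, boussinesqOp σ q u x = lam * ρ x * u x)
    (h0 : u 0 = 0) (h1 : deriv u 0 = 0) (h2 : deriv (deriv u) 0 = 0)
    (h2l : deriv (deriv u) l = 0)
    (h3 : 0 < deriv (deriv (deriv u)) 0) : False := by
  have hd0 : Differentiable ℝ u := hu.differentiable (by norm_num)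
  have hd1 : Differentiable ℝ (deriv u) := (peel3 hu).differentiable (by norm_num)
  have hcd2 : ContDiff ℝ 2 (deriv (deriv u)) := peel2 (peel3 hu)
  have hd2 : Differentiable ℝ (deriv (deriv u)) := hcd2.differentiable (by norm_num)
  have hd3 : Differentiable ℝ (deriv (deriv (deriv u))) :=
    (peel1 hcd2).differentiable one_ne_zero
  have hσd : Differentiable ℝ σ := hσs.differentiable (by norm_num)
  have hqd : Differentiable ℝ q := hqs.differentiable one_ne_zero
  simp only [boussinesqOp] at hode
  set W : ℝ → ℝ := fun t => σ t * deriv (deriv u) t with hWdef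
  have hWcd : ContDiff ℝ 2 W := (hσs.of_le (by norm_num)).mul hcd2
  have hWd : Differentiable ℝ W := hWcd.differentiable (by norm_num)
  have hWd1 : Differentiable ℝ (deriv W) := (peel1 hWcd).differentiable one_ne_zero
  have hWderiv : ∀ t, deriv W t
      = deriv σ t * deriv (deriv u) t + σ t * deriv (deriv (deriv u)) t := by
    intro t; exact deriv_mul (hσd t) (hd2 t)
  set v : ℝ → ℝ := fun t => deriv W t - q t * deriv u t with hvdef
  have hvd : Differentiable ℝ v := hWd1.sub (hqd.mul hd1)
  have hvderiv : ∀ x ∈ Icc (0:ℝ) l, deriv v x = lam * ρ x * u x := by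
    intro x hx
    have : deriv v x = deriv (deriv W) x - deriv (fun t => q t * deriv u t) x :=
      deriv_sub (hWd1 x) ((hqd x).mul (hd1 x))
    rw [this]; exact hode x hx
  have h0l : (0:ℝ) ∈ Icc (0:ℝ) l := ⟨le_rfl, hl.le⟩
  have hσ0pos : (0:ℝ) < σ 0 := lt_of_lt_of_le hσ0 (hσb 0 h0l)
  have hv0 : 0 < v 0 := by
    have : v 0 = σ 0 * deriv (deriv (deriv u)) 0 := by
      rw [hvdef]; simp only; rw [hWderiv 0, h1, h2]; ring
    rw [this]; exact mul_pos hσ0pos h3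
  -- find δ
  have hopen : {t : ℝ | 0 < deriv (deriv (deriv u)) t} ∈ nhds 0 :=
    (isOpen_lt continuous_const hd3.continuous).mem_nhds h3
  obtain ⟨ε, hε, hball⟩ := Metric.mem_nhds_iff.mp hopen
  set δ : ℝ := min (ε / 2) l with hδdef
  have hδpos : 0 < δ := lt_min (by linarith) hl
  have hδl : δ ≤ l := min_le_right _ _
  have hδball : ∀ t ∈ Icc (0:ℝ) δ, 0 < deriv (deriv (deriv u)) t := by
    intro t ht
    apply hball
    simp only [Metric.mem_ball, Real.dist_eq, sub_zero]
    rw [abs_of_nonneg ht.1]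
    calc t ≤ δ := ht.2
    _ ≤ ε / 2 := min_le_left _ _
    _ < ε := by linarith
  have hsm2 : StrictMonoOn (deriv (deriv u)) (Icc 0 δ) := by
    apply strictMonoOn_of_deriv_pos (convex_Icc _ _) hd2.continuous.continuousOn
    intro t ht
    rw [interior_Icc] at ht
    exact hδball t ⟨ht.1.le, ht.2.le⟩
  have hu2δ : ∀ t ∈ Ioc (0:ℝ) δ, 0 < deriv (deriv u) t := by
    intro t ht
    have := hsm2 ⟨le_rfl, hδpos.le⟩ ⟨ht.1.le, ht.2⟩ ht.1
    rwa [h2] at this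
  -- the first zero z of u'' beyond δ
  set T : Set ℝ := Icc δ l ∩ {x | deriv (deriv u) x ≤ 0} with hTdef
  have hTclosed : IsClosed T := isClosed_Icc.inter (isClosed_le hd2.continuous continuous_const)
  have hTne : l ∈ T := ⟨⟨hδl, le_rfl⟩, le_of_eq h2l⟩
  have hTbdd : BddBelow T := ⟨δ, fun x hx => hx.1.1⟩
  set z : ℝ := sInf T with hzdef
  have hz : z ∈ T := hTclosed.csInf_mem ⟨l, hTne⟩ hTbdd
  have hzδ : δ ≤ z := hz.1.1
  have hzl : z ≤ l := hz.1.2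
  have hz2 : deriv (deriv u) z ≤ 0 := hz.2
  have hzpos : 0 < z := lt_of_lt_of_le hδpos hzδ
  have hu2 : ∀ t ∈ Ioo (0:ℝ) z, 0 < deriv (deriv u) t := by
    intro t ht
    by_cases hts : t ≤ δ
    · exact hu2δ t ⟨ht.1, hts⟩
    · push_neg at hts
      by_contra hle; push_neg at hle
      have : t ∈ T := ⟨⟨hts.le, le_trans ht.2.le hzl⟩, hle⟩
      exact absurd (csInf_le hTbdd this) (not_le.mpr ht.2)
  have hsm1 : StrictMonoOn (deriv u) (Icc 0 z) := by
    apply strictMonoOn_of_deriv_pos (convex_Icc _ _) hd1.continuous.continuousOn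
    intro t ht; rw [interior_Icc] at ht; exact hu2 t ht
  have hu1 : ∀ t ∈ Ioo (0:ℝ) z, 0 < deriv u t := by
    intro t ht
    have := hsm1 ⟨le_rfl, hzpos.le⟩ ⟨ht.1.le, ht.2.le⟩ ht.1
    rwa [h1] at this
  have hsm0 : StrictMonoOn u (Icc 0 z) := by
    apply strictMonoOn_of_deriv_pos (convex_Icc _ _) hd0.continuous.continuousOn
    intro t ht; rw [interior_Icc] at ht; exact hu1 t ht
  have hu0 : ∀ t ∈ Ioo (0:ℝ) z, 0 < u t := by
    intro t ht
    have := hsm0 ⟨le_rfl, hzpos.le⟩ ⟨ht.1.le, ht.2.le⟩ ht.1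
    rwa [h0] at this
  have hsub : ∀ t ∈ Ioo (0:ℝ) z, t ∈ Icc (0:ℝ) l := fun t ht =>
    ⟨ht.1.le, le_trans ht.2.le hzl⟩
  have hsmv : StrictMonoOn v (Icc 0 z) := by
    apply strictMonoOn_of_deriv_pos (convex_Icc _ _) hvd.continuous.continuousOn
    intro t ht; rw [interior_Icc] at ht
    rw [hvderiv t (hsub t ht)]
    exact mul_pos (mul_pos hlam (lt_of_lt_of_le hρ0 (hρb t (hsub t ht)))) (hu0 t ht)
  have hvpos : ∀ t ∈ Ioo (0:ℝ) z, 0 < v t := by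
    intro t ht
    exact lt_trans hv0 (hsmv ⟨le_rfl, hzpos.le⟩ ⟨ht.1.le, ht.2.le⟩ ht.1)
  have hsmW : StrictMonoOn W (Icc 0 z) := by
    apply strictMonoOn_of_deriv_pos (convex_Icc _ _) hWd.continuous.continuousOn
    intro t ht; rw [interior_Icc] at ht
    have hWv : deriv W t = v t + q t * deriv u t := by rw [hvdef]; ring
    rw [hWv]
    have hq : 0 ≤ q t * deriv u t :=
      mul_nonneg (hqb t (hsub t ht)) (hu1 t ht).le
    linarith [hvpos t ht]
  have hWz : W 0 < W z := hsmW ⟨le_rfl, hzpos.le⟩ ⟨hzpos.le, le_rfl⟩ hzpos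
  have hW0 : W 0 = 0 := by rw [hWdef]; simp only; rw [h2]; ring
  have hWzle : W z ≤ 0 := by
    rw [hWdef]; simp only
    exact mul_nonpos_of_nonneg_of_nonpos (le_trans hσ0.le (hσb z ⟨hzpos.le, hzl⟩)) hz2
  rw [hW0] at hWz; linarith

lemma abs_le_norm4 (p : ℝ × ℝ × ℝ × ℝ) :
    |p.1| ≤ ‖p‖ ∧ |p.2.1| ≤ ‖p‖ ∧ |p.2.2.1| ≤ ‖p‖ ∧ |p.2.2.2| ≤ ‖p‖ := by
  have h1 := norm_fst_le p
  have h2 := norm_snd_le p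
  have h21 := norm_fst_le p.2
  have h22 := norm_snd_le p.2
  have h221 := norm_fst_le p.2.2
  have h222 := norm_snd_le p.2.2
  simp only [Real.norm_eq_abs] at h1 h21 h221 h222
  refine ⟨h1, ?_, ?_, ?_⟩ <;> [exact le_trans h21 h2;
    exact le_trans (le_trans h221 h22) h2; exact le_trans (le_trans h222 h22) h2]

lemma zero_of_cauchy
    {l : ℝ} (hl : 0 < l) {ρ σ q : ℝ → ℝ}
    (hρs : ContDiff ℝ 3 ρ) (hσs : ContDiff ℝ 3 σ) (hqs : ContDiff ℝ 1 q)
    {σ0 : ℝ} (hσ0 : 0 < σ0)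
    (hσb : ∀ x ∈ Icc (0:ℝ) l, σ0 ≤ σ x)
    {lam : ℝ} {u : ℝ → ℝ}
    (hu : ContDiff ℝ 4 u)
    (hode : ∀ x ∈ Icc (0:ℝ) l, boussinesqOp σ q u x = lam * ρ x * u x)
    (h0 : u 0 = 0) (h1 : deriv u 0 = 0) (h2 : deriv (deriv u) 0 = 0)
    (h3 : deriv (deriv (deriv u)) 0 = 0) :
    ∀ x ∈ Icc (0:ℝ) l, u x = 0 := by
  have hd0 : Differentiable ℝ u := hu.differentiable (by norm_num)
  have hd1 : Differentiable ℝ (deriv u) := (peel3 hu).differentiable (by norm_num)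
  have hcd2 : ContDiff ℝ 2 (deriv (deriv u)) := peel2 (peel3 hu)
  have hd2 : Differentiable ℝ (deriv (deriv u)) := hcd2.differentiable (by norm_num)
  have hσd : Differentiable ℝ σ := hσs.differentiable (by norm_num)
  have hqd : Differentiable ℝ q := hqs.differentiable one_ne_zero
  have hq' : Continuous (deriv q) := (contDiff_one_iff_deriv.mp hqs).2
  simp only [boussinesqOp] at hode
  set W : ℝ → ℝ := fun t => σ t * deriv (deriv u) t with hWdef
  have hWcd : ContDiff ℝ 2 W := (hσs.of_le (by norm_num)).mul hcd2
  have hWd : Differentiable ℝ W := hWcd.differentiable (by norm_num)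
  have hWd1 : Differentiable ℝ (deriv W) := (peel1 hWcd).differentiable one_ne_zero
  -- the state vector
  set f : ℝ → ℝ × ℝ × ℝ × ℝ :=
    fun x => (u x, deriv u x, W x, deriv W x) with hfdef
  set f' : ℝ → ℝ × ℝ × ℝ × ℝ :=
    fun x => (deriv u x, deriv (deriv u) x, deriv W x, deriv (deriv W) x) with hf'def
  have hfc : ContinuousOn f (Icc 0 l) := by
    apply ContinuousOn.prodMk hd0.continuous.continuousOn
    apply ContinuousOn.prodMk hd1.continuous.continuousOn
    exact ContinuousOn.prodMk hWd.continuous.continuousOn hWd1.continuous.continuousOn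
  have hfd : ∀ x ∈ Ico (0:ℝ) l, HasDerivWithinAt f (f' x) (Ici x) x := by
    intro x _
    apply HasDerivAt.hasDerivWithinAt
    exact ((hd0 x).hasDerivAt.prodMk ((hd1 x).hasDerivAt.prodMk
      ((hWd x).hasDerivAt.prodMk (hWd1 x).hasDerivAt)))
  have hf0 : ‖f 0‖ ≤ 0 := by
    have hW0 : W 0 = 0 := by rw [hWdef]; simp only; rw [h2]; ring
    have hW0' : deriv W 0 = 0 := by
      rw [hWdef, deriv_fun_mul (hσd 0) (hd2 0), h2, h3]; ring
    simp [hfdef, h0, h1, hW0, hW0', Prod.norm_def]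
  -- the bound
  have hcont : ContinuousOn (fun x => |lam| * |ρ x| + |deriv q x| + |q x| / σ0)
      (Icc (0:ℝ) l) := by
    apply ContinuousOn.add
    apply ContinuousOn.add
    · exact (continuous_const.mul (hρs.continuous.abs)).continuousOn
    · exact hq'.abs.continuousOn
    · exact (hqd.continuous.abs.div_const σ0).continuousOn
  obtain ⟨C, hC⟩ := (isCompact_Icc).exists_bound_of_continuousOn hcont
  obtain ⟨K, hK1, hKσ, hKC⟩ : ∃ K : ℝ, 1 ≤ K ∧ 1 / σ0 ≤ K ∧ C ≤ K := by
    refine ⟨1 + 1 / σ0 + max C 0, ?_, ?_, ?_⟩ <;>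
      · have h1 := le_max_right C 0
        have h2 := le_max_left C 0
        have h3 : 0 < 1 / σ0 := by positivity
        linarith
  have habs2 : ∀ x ∈ Icc (0:ℝ) l, |deriv (deriv u) x| ≤ (1 / σ0) * ‖f x‖ := by
    intro x hx
    have hσx : σ0 ≤ σ x := hσb x hx
    have hWx : |W x| ≤ ‖f x‖ := (abs_le_norm4 (f x)).2.2.1
    have : σ0 * |deriv (deriv u) x| ≤ |W x| := by
      rw [hWdef]; simp only [abs_mul]
      rw [abs_of_pos (lt_of_lt_of_le hσ0 hσx)]
      exact mul_le_mul_of_nonneg_right hσx (abs_nonneg _)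
    rw [div_mul_eq_mul_div, le_div_iff₀ hσ0]
    calc |deriv (deriv u) x| * σ0 = σ0 * |deriv (deriv u) x| := by ring
    _ ≤ |W x| := this
    _ ≤ ‖f x‖ := hWx
    _ = 1 * ‖f x‖ := by ring
  have hbound : ∀ x ∈ Ico (0:ℝ) l, ‖f' x‖ ≤ K * ‖f x‖ + 0 := by
    intro x hx
    have hx' : x ∈ Icc (0:ℝ) l := ⟨hx.1, hx.2.le⟩
    have hM : (0:ℝ) ≤ ‖f x‖ := norm_nonneg _
    obtain ⟨ha, hb, hc, hd⟩ := abs_le_norm4 (f x)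
    have h2' := habs2 x hx'
    -- fourth component via the ODE
    have hode' : deriv (deriv W) x
        = lam * ρ x * u x + (deriv q x * deriv u x + q x * deriv (deriv u) x) := by
      have h := hode x hx'
      have hqu : deriv (fun t => q t * deriv u t) x
          = deriv q x * deriv u x + q x * deriv (deriv u) x :=
        deriv_mul (hqd x) (hd1 x)
      rw [hqu] at h
      linarith [h]
    have hdd : |deriv (deriv W) x| ≤ K * ‖f x‖ := by
      rw [hode']
      have t1 : |lam * ρ x * u x| ≤ |lam| * |ρ x| * ‖f x‖ := by
        rw [abs_mul, abs_mul]
        exact mul_le_mul_of_nonneg_left ha (by positivity)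
      have t2 : |deriv q x * deriv u x| ≤ |deriv q x| * ‖f x‖ := by
        rw [abs_mul]; exact mul_le_mul_of_nonneg_left hb (abs_nonneg _)
      have t3 : |q x * deriv (deriv u) x| ≤ |q x| / σ0 * ‖f x‖ := by
        rw [abs_mul]
        calc |q x| * |deriv (deriv u) x| ≤ |q x| * ((1 / σ0) * ‖f x‖) :=
              mul_le_mul_of_nonneg_left h2' (abs_nonneg _)
        _ = |q x| / σ0 * ‖f x‖ := by ring
      have hCx := hC x hx'
      rw [Real.norm_eq_abs] at hCx
      have hCx' : |lam| * |ρ x| + |deriv q x| + |q x| / σ0 ≤ C := le_trans (le_abs_self _) hCx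
      calc |lam * ρ x * u x + (deriv q x * deriv u x + q x * deriv (deriv u) x)|
          ≤ |lam * ρ x * u x| + |deriv q x * deriv u x| + |q x * deriv (deriv u) x| := by
            calc _ ≤ |lam * ρ x * u x| + |deriv q x * deriv u x + q x * deriv (deriv u) x| :=
                  abs_add_le _ _
            _ ≤ _ := by linarith [abs_add_le (deriv q x * deriv u x) (q x * deriv (deriv u) x)]
      _ ≤ (|lam| * |ρ x| + |deriv q x| + |q x| / σ0) * ‖f x‖ := by linarith [t1, t2, t3]
      _ ≤ C * ‖f x‖ := mul_le_mul_of_nonneg_right hCx' hM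
      _ ≤ K * ‖f x‖ := mul_le_mul_of_nonneg_right hKC hM
    rw [add_zero]
    rw [hf'def]
    simp only [Prod.norm_def, Real.norm_eq_abs]
    rw [max_le_iff, max_le_iff, max_le_iff]
    refine ⟨?_, ?_, ?_, ?_⟩
    · exact le_trans hb (le_mul_of_one_le_left hM hK1)
    · exact le_trans h2' (mul_le_mul_of_nonneg_right hKσ hM)
    · exact le_trans hd (le_mul_of_one_le_left hM hK1)
    · exact hdd
  have hmain := norm_le_gronwallBound_of_norm_deriv_right_le hfc hfd hf0 hbound
  intro x hx
  have := hmain x hx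
  rw [gronwallBound_ε0_δ0] at this
  have hux : |u x| ≤ ‖f x‖ := (abs_le_norm4 (f x)).1
  have : |u x| ≤ 0 := le_trans hux this
  exact abs_nonpos_iff.mp this

lemma vanish
    {l : ℝ} (hl : 0 < l) {ρ σ q : ℝ → ℝ}
    (hρs : ContDiff ℝ 3 ρ) (hσs : ContDiff ℝ 3 σ) (hqs : ContDiff ℝ 1 q)
    {ρ0 σ0 : ℝ} (hρ0 : 0 < ρ0) (hσ0 : 0 < σ0)
    (hρb : ∀ x ∈ Icc (0:ℝ) l, ρ0 ≤ ρ x)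
    (hσb : ∀ x ∈ Icc (0:ℝ) l, σ0 ≤ σ x)
    (hqb : ∀ x ∈ Icc (0:ℝ) l, 0 ≤ q x)
    {lam : ℝ} (hlam : 0 < lam) {u : ℝ → ℝ}
    (hmem : MemHalfBVP σ q ρ l lam u) (h1 : deriv u 0 = 0) :
    ∀ x ∈ Icc (0:ℝ) l, u x = 0 := by
  obtain ⟨hu, hode, h0, h2, h2l⟩ := hmem
  have h3 : deriv (deriv (deriv u)) 0 = 0 := by
    rcases lt_trichotomy (deriv (deriv (deriv u)) 0) 0 with hlt | heq | hgt
    · exfalso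
      set nu : ℝ → ℝ := fun t => -u t with hnudef
      have hnu : ContDiff ℝ 4 nu := hu.neg
      have e1 : deriv nu = fun t => -deriv u t := deriv_negf u
      have e2 : deriv (deriv nu) = fun t => -deriv (deriv u) t := by
        rw [e1]; exact deriv_negf _
      have e3 : deriv (deriv (deriv nu)) = fun t => -deriv (deriv (deriv u)) t := by
        rw [e2]; exact deriv_negf _
      apply no_pos_third hl hσs hqs hρ0 hσ0 hρb hσb hqb hlam hnu
        (fun x hx => by rw [hnudef]; rw [boussinesq_neg, hode x hx]; ring)
        (by rw [hnudef]; simp [h0])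
        (by rw [e1]; simp [h1])
        (by rw [e2]; simp [h2])
        (by rw [e2]; simp [h2l])
      rw [e3]; simp only; linarith
    · exact heq
    · exact absurd hgt (fun hgt => no_pos_third hl hσs hqs hρ0 hσ0 hρb hσb hqb hlam
        hu hode h0 h1 h2 h2l hgt)
  exact zero_of_cauchy hl hρs hσs hqs hσ0 hσb hu hode h0 h1 h2 h3

/-- **One-dimensionality of the half-boundary-value solution space.** Any two elements
of `E_λ` are linearly dependent on `[0,l]`. -/
theorem halfBVP_solution_space_dim_le_one
    (l : ℝ) (hl : 0 < l)
    (ρ σ q : ℝ → ℝ)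
    (hρs : ContDiff ℝ 3 ρ) (hσs : ContDiff ℝ 3 σ) (hqs : ContDiff ℝ 1 q)
    (ρ0 σ0 : ℝ) (hρ0 : 0 < ρ0) (hσ0 : 0 < σ0)
    (hρb : ∀ x ∈ Icc (0:ℝ) l, ρ0 ≤ ρ x)
    (hσb : ∀ x ∈ Icc (0:ℝ) l, σ0 ≤ σ x)
    (hqb : ∀ x ∈ Icc (0:ℝ) l, 0 ≤ q x)
    (lam : ℝ) (hlam : 0 < lam)
    (φ ψ : ℝ → ℝ)
    (hφ : MemHalfBVP σ q ρ l lam φ) (hψ : MemHalfBVP σ q ρ l lam ψ) :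
    ∃ a b : ℝ, ¬(a = 0 ∧ b = 0) ∧ ∀ x ∈ Icc (0:ℝ) l, a * φ x + b * ψ x = 0 := by
  obtain ⟨hφ4, hφode, hφ0, hφ2, hφ2l⟩ := hφ
  obtain ⟨hψ4, hψode, hψ0, hψ2, hψ2l⟩ := hψ
  have hφd0 : Differentiable ℝ φ := hφ4.differentiable (by norm_num)
  have hψd0 : Differentiable ℝ ψ := hψ4.differentiable (by norm_num)
  have hφd1 : Differentiable ℝ (deriv φ) := (peel3 hφ4).differentiable (by norm_num)
  have hψd1 : Differentiable ℝ (deriv ψ) := (peel3 hψ4).differentiable (by norm_num)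
  by_cases hc : deriv φ 0 = 0
  · refine ⟨1, 0, by simp, fun x hx => ?_⟩
    have := vanish hl hρs hσs hqs hρ0 hσ0 hρb hσb hqb hlam
      ⟨hφ4, hφode, hφ0, hφ2, hφ2l⟩ hc x hx
    simp [this]
  · refine ⟨deriv ψ 0, -(deriv φ 0), ?_, ?_⟩
    · rintro ⟨-, hb⟩; exact hc (neg_eq_zero.mp hb)
    · set a : ℝ := deriv ψ 0 with hadef
      set b : ℝ := -(deriv φ 0) with hbdef
      set u : ℝ → ℝ := fun x => a * φ x + b * ψ x with hudef
      have hu4 : ContDiff ℝ 4 u := (contDiff_const.mul hφ4).add (contDiff_const.mul hψ4)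
      have e1 : deriv u = fun x => a * deriv φ x + b * deriv ψ x :=
        deriv_comb a b hφd0 hψd0
      have e2 : deriv (deriv u) = fun x => a * deriv (deriv φ) x + b * deriv (deriv ψ) x := by
        rw [e1]; exact deriv_comb a b hφd1 hψd1
      have hmem : MemHalfBVP σ q ρ l lam u := by
        refine ⟨hu4, fun x hx => ?_, ?_, ?_, ?_⟩
        · rw [hudef, boussinesq_comb hσs hqs hφ4 hψ4 a b x, hφode x hx, hψode x hx]; ring
        · rw [hudef]; simp only; rw [hφ0, hψ0]; ring
        · rw [e2]; simp only; rw [hφ2, hψ2]; ring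
        · rw [e2]; simp only; rw [hφ2l, hψ2l]; ring
      have h1 : deriv u 0 = 0 := by
        rw [e1]; simp only; rw [hadef, hbdef]; ring
      exact vanish hl hρs hσs hqs hρ0 hσ0 hρb hσb hqb hlam hmem h1
end
end
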